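/- For N=2 and 0 < m < 2: if u₀ ∈ C([0,1]) is nondecreasing, differentiable at 0, with u₀(0)=0, u₀(1)=m, and sup_{x∈(0,1]} u₀(x)/x ≤ K, then u₀(x) ≤ U_{a₀}(x) for all x ∈ [0,1], where a₀ = K/(1 − m/2) and U_{a₀}(x) = a₀·x/(1 + a₀·x/2). -/
import Mathlib


open Real Set

theorem supersolution_bound_N2 (m K : ℝ) (hm0 : 0 < m) (hm2 : m < 2)
    (u₀ : ℝ → ℝ) (hmono : MonotoneOn u₀ (Set.Icc 0 1))
    (hcont : ContinuousOn u₀ (Set.Icc 0 1))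
    (hdiff : ∃ d : ℝ, HasDerivWithinAt u₀ d (Set.Icc 0 1) 0)
    (h0 : u₀ 0 = 0) (h1 : u₀ 1 = m)
    (hK : ∀ x ∈ Set.Ioc (0:ℝ) 1, u₀ x / x ≤ K) :
    ∀ x ∈ Set.Icc (0:ℝ) 1,
      u₀ x ≤ (K / (1 - m / 2)) * x / (1 + (K / (1 - m / 2)) * x / 2) := by
  have hmK : m ≤ K := by
    have := hK 1 ⟨one_pos, le_refl 1⟩
    simpa [h1] using this
  have hK0 : 0 < K := lt_of_lt_of_le hm0 hmK
  have hden : (0:ℝ) < 1 - m / 2 := by linarith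
  set a := K / (1 - m / 2) with ha
  have ha0 : 0 < a := div_pos hK0 hden
  have haK : a * (1 - m / 2) = K := div_mul_cancel₀ K hden.ne'
  intro x hx
  obtain ⟨hx0, hx1⟩ := hx
  have hD : 0 < 1 + a * x / 2 := by nlinarith
  rcases le_or_gt (K * x) m with hcase | hcase
  · -- u₀ x ≤ K x ≤ U(x)
    have h1' : u₀ x ≤ K * x := by
      rcases eq_or_lt_of_le hx0 with h | h
      · simp [← h, h0]
      · have := hK x ⟨h, hx1⟩
        calc u₀ x = (u₀ x / x) * x := by field_simp
          _ ≤ K * x := by apply mul_le_mul_of_nonneg_right this hx0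
    have h2' : K * x ≤ a * x / (1 + a * x / 2) := by
      rw [le_div_iff₀ hD]
      nlinarith [mul_nonneg (mul_nonneg ha0.le hx0) (sub_nonneg.mpr hcase)]
    linarith
  · -- u₀ x ≤ m ≤ U(x)
    have h1' : u₀ x ≤ m := by
      have := hmono ⟨hx0, hx1⟩ (by constructor <;> norm_num) hx1
      simpa [h1] using this
    have h2' : m ≤ a * x / (1 + a * x / 2) := by
      rw [le_div_iff₀ hD]
      nlinarith
    linarith
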